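/- Non-Archimedean open mapping / image of a disc: let k be an algebraically closed field complete with respect to a nontrivial non-Archimedean absolute value, r ∈ |k*|, and f = Σ_{n≥0} aₙ zⁿ a non-constant power series with |aₙ| rⁿ → 0. Let m ≥ 1 be minimal with a_m ≠ 0 and set δ = sup_{n≥m} |aₙ| rⁿ. Then the image of {z ∈ k : |z| ≤ r} under f is exactly the closed disc {w ∈ k : |w − a₀| ≤ δ}. -/

import Mathlib

open Filter

set_option linter.unusedSectionVars false
set_option maxHeartbeats 1000000

open Polynomial

section Aux
variable {k : Type*} [NontriviallyNormedField k] [IsUltrametricDist k]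





lemma IOD.summable_of_norm_tendsto_zero [CompleteSpace k] {u : ℕ → k}
    (h : Tendsto (fun n => ‖u n‖) atTop (nhds 0)) : Summable u := by
  apply NonarchimedeanAddGroup.summable_of_tendsto_cofinite_zero
  rw [Nat.cofinite_eq_atTop]
  exact tendsto_zero_iff_norm_tendsto_zero.mpr h

lemma IOD.norm_add_eq_of_lt {x y : k} (h : ‖y‖ < ‖x‖) : ‖x + y‖ = ‖x‖ := by
  refine le_antisymm ((IsUltrametricDist.norm_add_le_max x y).trans (max_le le_rfl h.le)) ?_
  have h2 : ‖x‖ ≤ max ‖x + y‖ ‖y‖ := by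
    simpa using IsUltrametricDist.norm_add_le_max (x + y) (-y)
  rcases max_cases ‖x + y‖ ‖y‖ with ⟨he, _⟩ | ⟨he, _⟩
  · rw [he] at h2; exact h2
  · rw [he] at h2; linarith

lemma IOD.norm_tsum_eq_of_dominant {u : ℕ → k} (hs : Summable u) {n₀ : ℕ} {β : ℝ}
    (hβ0 : 0 ≤ β) (hβ : β < ‖u n₀‖) (h : ∀ n, n ≠ n₀ → ‖u n‖ ≤ β) :
    ‖∑' n, u n‖ = ‖u n₀‖ := by
  classical
  rw [hs.tsum_eq_add_tsum_ite n₀]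
  have hb : ‖∑' n, if n = n₀ then 0 else u n‖ ≤ β := by
    apply IsUltrametricDist.norm_tsum_le_of_forall_le_of_nonneg hβ0
    intro i
    by_cases hi : i = n₀
    · simp [hi, hβ0]
    · simpa [hi] using h i hi
  exact IOD.norm_add_eq_of_lt (lt_of_le_of_lt hb hβ)

/-- A nonnegative sequence tending to zero attains its sup over every tail. -/
lemma IOD.attain {t : ℕ → ℝ} (h0 : ∀ n, 0 ≤ t n) (ht : Tendsto t atTop (nhds 0))
    (j : ℕ) : ∃ N, j ≤ N ∧ ∀ n, j ≤ n → t n ≤ t N := by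
  by_cases hall : ∀ n, j ≤ n → t n ≤ t j
  · exact ⟨j, le_rfl, hall⟩
  push_neg at hall
  obtain ⟨n₁, hn₁j, hn₁⟩ := hall
  have hpos : 0 < t n₁ := lt_of_le_of_lt (h0 j) hn₁
  have hev : ∀ᶠ n in atTop, t n < t n₁ := ht.eventually_lt_const hpos
  obtain ⟨K, hK⟩ := eventually_atTop.mp hev
  set M := max K n₁ with hM
  have hn₁mem : n₁ ∈ Finset.Icc j M := by
    simp [Finset.mem_Icc]
    exact ⟨hn₁j, le_max_right _ _⟩
  obtain ⟨N, hNmem, hNmax⟩ := Finset.exists_max_image (Finset.Icc j M) t ⟨n₁, hn₁mem⟩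
  rw [Finset.mem_Icc] at hNmem
  refine ⟨N, hNmem.1, fun n hn => ?_⟩
  by_cases hnM : n ≤ M
  · exact hNmax n (Finset.mem_Icc.mpr ⟨hn, hnM⟩)
  · push_neg at hnM
    have : t n < t n₁ := hK n (le_trans (le_max_left K n₁) hnM.le)
    exact le_trans this.le (hNmax n₁ hn₁mem)

lemma IOD.multiset_norm_prod (s : Multiset k) : ‖s.prod‖ = (s.map fun x => ‖x‖).prod := by
  induction s using Multiset.induction with
  | empty => simp
  | cons a s ih => simp [norm_mul, ih]

lemma IOD.multiset_pow_card_le_prod (s : Multiset ℝ) (μ : ℝ) (hμ : 0 ≤ μ)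
    (h : ∀ x ∈ s, μ ≤ x) : μ ^ (Multiset.card s) ≤ s.prod := by
  induction s using Multiset.induction with
  | empty => simp
  | cons a s ih =>
    simp only [Multiset.card_cons, Multiset.prod_cons, pow_succ, mul_comm (μ ^ _) μ]
    have ha := h a (Multiset.mem_cons_self a s)
    have hs := ih (fun x hx => h x (Multiset.mem_cons_of_mem hx))
    have hμc : (0:ℝ) ≤ μ ^ Multiset.card s := pow_nonneg hμ _
    nlinarith [pow_nonneg hμ (Multiset.card s)]

lemma IOD.multiset_prod_pos (s : Multiset ℝ) (h : ∀ x ∈ s, 0 < x) : 0 < s.prod := by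
  induction s using Multiset.induction with
  | empty => simp
  | cons a s ih =>
    simp only [Multiset.prod_cons]
    exact mul_pos (h a (Multiset.mem_cons_self a s))
      (ih fun x hx => h x (Multiset.mem_cons_of_mem hx))

lemma IOD.multiset_norm_sum_le {s : Multiset k} {C : ℝ} (hC : 0 ≤ C)
    (h : ∀ x ∈ s, ‖x‖ ≤ C) : ‖s.sum‖ ≤ C := by
  induction s using Multiset.induction with
  | empty => simpa using hC
  | cons a s ih =>
    simp only [Multiset.sum_cons]
    refine (IsUltrametricDist.norm_add_le_max _ _).trans (max_le ?_ ?_)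
    · exact h a (Multiset.mem_cons_self a s)
    · exact ih fun x hx => h x (Multiset.mem_cons_of_mem hx)




/-- Newton polygon root existence: if `‖P.coeff 0‖ ≤ ‖P.coeff N‖ * ρ^N` for some `N ≥ 1`,
then `P` has a root of norm at most `ρ`. -/
lemma IOD.polynomial_root_in_disc [IsAlgClosed k] (P : Polynomial k) {ρ : ℝ} (hρ : 0 < ρ)
    {N : ℕ} (hN : 1 ≤ N) (h : ‖P.coeff 0‖ ≤ ‖P.coeff N‖ * ρ ^ N) :
    ∃ z : k, ‖z‖ ≤ ρ ∧ P.eval z = 0 := by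
  classical
  by_cases h0 : P.coeff 0 = 0
  · exact ⟨0, by simp [hρ.le], by rw [← coeff_zero_eq_eval_zero]; exact h0⟩
  have hcN : P.coeff N ≠ 0 := by
    intro hc
    rw [hc] at h
    simp only [norm_zero, zero_mul] at h
    exact h0 (norm_le_zero_iff.mp h)
  have hP : P ≠ 0 := fun hP => hcN (by simp [hP])
  have hNd : N ≤ P.natDegree := le_natDegree_of_ne_zero hcN
  have hsplit : Splits P := IsAlgClosed.splits P
  have hcard : Multiset.card P.roots = P.natDegree := splits_iff_card_roots.mp hsplit
  by_contra hno
  push_neg at hno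
  set R := P.roots with hR
  -- every root has norm > ρ
  have hroot : ∀ z ∈ R, ρ < ‖z‖ := by
    intro z hz
    by_contra hle
    push_neg at hle
    exact hno z hle ((mem_roots hP).mp hz)
  have hRne : R ≠ 0 := by
    intro he
    rw [he] at hcard
    simp at hcard
    omega
  -- minimum root norm μ
  obtain ⟨z₀, hz₀R⟩ := Multiset.exists_mem_of_ne_zero hRne
  have hTne : (R.toFinset.image fun z => ‖z‖).Nonempty :=
    ⟨‖z₀‖, Finset.mem_image_of_mem _ (Multiset.mem_toFinset.mpr hz₀R)⟩
  set μ := (R.toFinset.image fun z => ‖z‖).min' hTne with hμdef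
  have hμle : ∀ z ∈ R, μ ≤ ‖z‖ := fun z hz =>
    Finset.min'_le _ _ (Finset.mem_image_of_mem _ (Multiset.mem_toFinset.mpr hz))
  have hρμ : ρ < μ := by
    obtain ⟨z, hz, hzval⟩ := Finset.mem_image.mp ((R.toFinset.image fun z => ‖z‖).min'_mem hTne)
    rw [hμdef, ← hzval]
    exact hroot z (Multiset.mem_toFinset.mp hz)
  have hμ0 : 0 < μ := lt_trans hρ hρμ
  set Pi := (R.map fun z => ‖z‖).prod with hPidef
  have hPipos : 0 < Pi := by
    apply IOD.multiset_prod_pos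
    intro x hx
    obtain ⟨z, hz, rfl⟩ := Multiset.mem_map.mp hx
    exact lt_trans hρ (hroot z hz)
  have hfact : P = C P.leadingCoeff * (R.map fun x => X - C x).prod := hsplit.eq_prod_roots
  have hlc : P.leadingCoeff ≠ 0 := leadingCoeff_ne_zero.mpr hP
  -- ‖coeff 0‖ = ‖lc‖ * Pi
  have hc0 : ‖P.coeff 0‖ = ‖P.leadingCoeff‖ * Pi := by
    rw [coeff_zero_eq_eval_zero]
    conv_lhs => rw [hfact]
    rw [eval_mul, eval_C, eval_multiset_prod, norm_mul, Multiset.map_map]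
    congr 1
    rw [IOD.multiset_norm_prod, Multiset.map_map]
    congr 1
    ext z
    simp
  -- coeff N bound
  have hcoeffN : P.coeff N = P.leadingCoeff * ((-1) ^ (Multiset.card R - N) * R.esymm (Multiset.card R - N)) := by
    conv_lhs => rw [hfact]
    rw [coeff_C_mul, Multiset.prod_X_sub_C_coeff R (by rw [hcard]; exact hNd)]
  have hesymm : ‖R.esymm (Multiset.card R - N)‖ ≤ Pi / μ ^ N := by
    rw [Multiset.esymm]
    apply IOD.multiset_norm_sum_le (by positivity)
    intro x hx
    obtain ⟨S, hS, rfl⟩ := Multiset.mem_map.mp hx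
    rw [Multiset.mem_powersetCard] at hS
    obtain ⟨hSle, hScard⟩ := hS
    rw [IOD.multiset_norm_prod]
    rw [le_div_iff₀ (by positivity)]
    -- (S.map norm).prod * μ^N ≤ Pi
    have hsplitR : S + (R - S) = R := add_tsub_cancel_of_le hSle
    have hcard2 : Multiset.card (R - S) = N := by
      rw [Multiset.card_sub hSle, hScard, hcard]
      omega
    have hPieq : Pi = (S.map fun z => ‖z‖).prod * ((R - S).map fun z => ‖z‖).prod := by
      rw [hPidef]
      conv_lhs => rw [← hsplitR]
      rw [Multiset.map_add, Multiset.prod_add]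
    rw [hPieq]
    have hμN : μ ^ N ≤ ((R - S).map fun z => ‖z‖).prod := by
      have := IOD.multiset_pow_card_le_prod ((R - S).map fun z => ‖z‖) μ hμ0.le ?_
      · rwa [Multiset.card_map, hcard2] at this
      · intro x hx
        obtain ⟨z, hz, rfl⟩ := Multiset.mem_map.mp hx
        exact hμle z (Multiset.mem_of_le (Multiset.sub_le_self R S) hz)
    have hSnn : 0 ≤ (S.map fun z => ‖z‖).prod := by
      apply le_of_lt
      apply IOD.multiset_prod_pos
      intro x hx
      obtain ⟨z, hz, rfl⟩ := Multiset.mem_map.mp hx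
      exact lt_trans hρ (hroot z (Multiset.mem_of_le hSle hz))
    exact mul_le_mul_of_nonneg_left hμN hSnn
  have hnormN : ‖P.coeff N‖ ≤ ‖P.leadingCoeff‖ * (Pi / μ ^ N) := by
    rw [hcoeffN, norm_mul, norm_mul, norm_pow, norm_neg, norm_one, one_pow, one_mul]
    exact mul_le_mul_of_nonneg_left hesymm (norm_nonneg _)
  -- contradiction
  have hlcpos : 0 < ‖P.leadingCoeff‖ := norm_pos_iff.mpr hlc
  have hfinal : ‖P.coeff N‖ * ρ ^ N < ‖P.coeff 0‖ := by
    rw [hc0]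
    calc ‖P.coeff N‖ * ρ ^ N ≤ (‖P.leadingCoeff‖ * (Pi / μ ^ N)) * ρ ^ N :=
          mul_le_mul_of_nonneg_right hnormN (by positivity)
      _ = ‖P.leadingCoeff‖ * Pi * (ρ / μ) ^ N := by
          rw [div_pow]
          field_simp
      _ < ‖P.leadingCoeff‖ * Pi * 1 := by
          exact mul_lt_mul_of_pos_left
            (pow_lt_one₀ (by positivity) ((div_lt_one hμ0).mpr hρμ) (by omega))
            (by positivity)
      _ = ‖P.leadingCoeff‖ * Pi := mul_one _
  linarith



/-- decay predicate: coefficients decay on the disc of radius r. -/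
def IOD.D (r : ℝ) (h : ℕ → k) : Prop := Tendsto (fun n => ‖h n‖ * r ^ n) atTop (nhds 0)

/-- recentering of a power series -/
noncomputable def IOD.shift (b : k) (h : ℕ → k) : ℕ → k :=
  fun j => ∑' i, h (j + i) * (((j + i).choose j : ℕ) : k) * b ^ i

variable {r : ℝ} {b z : k} {h : ℕ → k}

lemma IOD.term_bound (hbr : ‖b‖ ≤ r) (j i : ℕ) :
    ‖h (j + i) * (((j + i).choose j : ℕ) : k) * b ^ i‖ ≤ ‖h (j + i)‖ * r ^ i := by
  have hr0 : (0:ℝ) ≤ r := le_trans (norm_nonneg b) hbr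
  rw [norm_mul, norm_mul, norm_pow]
  calc ‖h (j+i)‖ * ‖(((j + i).choose j : ℕ) : k)‖ * ‖b‖ ^ i
      ≤ ‖h (j+i)‖ * 1 * r ^ i := by
        have h1 : ‖(((j + i).choose j : ℕ) : k)‖ ≤ 1 := IsUltrametricDist.norm_natCast_le_one k _
        have h2 : ‖b‖ ^ i ≤ r ^ i := pow_le_pow_left₀ (norm_nonneg b) hbr i
        have h3 : (0:ℝ) ≤ ‖h (j+i)‖ := norm_nonneg _
        have h4 : (0:ℝ) ≤ ‖b‖ ^ i := by positivity
        nlinarith [mul_le_mul h2 h1 (le_trans h4 h2 |> fun _ => (norm_nonneg _)) (by positivity : (0:ℝ) ≤ r ^ i)]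
    _ = ‖h (j+i)‖ * r ^ i := by ring

lemma IOD.tail_tendsto (hD : IOD.D r h) (hr : 0 < r) (j : ℕ) :
    Tendsto (fun i => ‖h (j + i)‖ * r ^ i) atTop (nhds 0) := by
  have h1 : Tendsto (fun i => ‖h (j + i)‖ * r ^ (j + i)) atTop (nhds 0) := by
    have := hD.comp (tendsto_add_atTop_nat j)
    simpa [Function.comp_def, Nat.add_comm] using this
  have h2 : Tendsto (fun i => (‖h (j + i)‖ * r ^ (j + i)) / r ^ j) atTop (nhds 0) := by
    simpa using h1.div_const (r ^ j)
  convert h2 using 2 with i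
  rw [pow_add]
  field_simp

lemma IOD.shift_term_summable [CompleteSpace k] (hD : IOD.D r h) (hr : 0 < r)
    (hbr : ‖b‖ ≤ r) (j : ℕ) :
    Summable (fun i => h (j + i) * (((j + i).choose j : ℕ) : k) * b ^ i) := by
  apply IOD.summable_of_norm_tendsto_zero
  apply squeeze_zero (fun i => norm_nonneg _) (fun i => IOD.term_bound hbr j i)
  exact IOD.tail_tendsto hD hr j

/-- S1: tail bound for shifted coefficients -/
lemma IOD.shift_bound (hr : 0 < r) (hbr : ‖b‖ ≤ r) {j : ℕ} {B : ℝ}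
    (hB : ∀ n, j ≤ n → ‖h n‖ * r ^ n ≤ B) : ‖IOD.shift b h j‖ * r ^ j ≤ B := by
  have hB0 : (0:ℝ) ≤ B := le_trans (by positivity) (hB j le_rfl)
  have hstep : ‖IOD.shift b h j‖ ≤ B / r ^ j := by
    apply IsUltrametricDist.norm_tsum_le_of_forall_le_of_nonneg (by positivity)
    intro i
    refine (IOD.term_bound hbr j i).trans ?_
    rw [le_div_iff₀ (by positivity)]
    calc ‖h (j + i)‖ * r ^ i * r ^ j = ‖h (j + i)‖ * r ^ (j + i) := by
          rw [pow_add]; ring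
      _ ≤ B := hB (j + i) (Nat.le_add_right j i)
  calc ‖IOD.shift b h j‖ * r ^ j ≤ (B / r ^ j) * r ^ j :=
        mul_le_mul_of_nonneg_right hstep (by positivity)
    _ = B := by field_simp

/-- S2: decay is preserved by recentering -/
lemma IOD.shift_decay (hD : IOD.D r h) (hr : 0 < r) (hbr : ‖b‖ ≤ r) :
    IOD.D r (IOD.shift b h) := by
  rw [IOD.D, Metric.tendsto_atTop]
  intro ε hε
  rw [IOD.D, Metric.tendsto_atTop] at hD
  obtain ⟨K, hK⟩ := hD (ε / 2) (by positivity)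
  refine ⟨K, fun j hj => ?_⟩
  have hb : ∀ n, j ≤ n → ‖h n‖ * r ^ n ≤ ε / 2 := by
    intro n hn
    have := hK n (le_trans hj hn)
    rw [Real.dist_eq, sub_zero, abs_of_nonneg (by positivity)] at this
    exact this.le
  have := IOD.shift_bound hr hbr hb
  rw [Real.dist_eq, sub_zero, abs_of_nonneg (by positivity)]
  linarith

lemma IOD.summable_rep [CompleteSpace k] (hD : IOD.D r h) (hzr : ‖z‖ ≤ r) :
    Summable (fun j => h j * z ^ j) := by
  apply IOD.summable_of_norm_tendsto_zero
  apply squeeze_zero (fun i => norm_nonneg _) (g := fun n => ‖h n‖ * r ^ n) ?_ hD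
  intro n
  rw [norm_mul, norm_pow]
  exact mul_le_mul_of_nonneg_left (pow_le_pow_left₀ (norm_nonneg z) hzr n) (norm_nonneg _)

def IOD.diagEquiv : (Σ _n : ℕ, Fin (_n+1)) ≃ ℕ × ℕ where
  toFun s := (s.2.1, s.1 - s.2.1)
  invFun p := ⟨p.1 + p.2, ⟨p.1, by omega⟩⟩
  left_inv := by
    rintro ⟨n, ⟨q, hq⟩⟩
    have h1 : q + (n - q) = n := by omega
    dsimp only
    refine Sigma.ext h1 ?_
    refine (Fin.heq_ext_iff (by dsimp only; rw [h1])).mpr rfl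
  right_inv := by
    rintro ⟨j, i⟩
    simp

/-- S3: the recentered series represents f(z + b) -/
lemma IOD.shift_rep [CompleteSpace k] (hD : IOD.D r h) (hr : 0 < r)
    (hbr : ‖b‖ ≤ r) (hzr : ‖z‖ ≤ r) :
    ∑' j, IOD.shift b h j * z ^ j = ∑' n, h n * (z + b) ^ n := by
  classical
  set F : ℕ × ℕ → k :=
    fun p => h (p.1 + p.2) * (((p.1 + p.2).choose p.1 : ℕ) : k) * b ^ p.2 * z ^ p.1 with hF
  have hFbound : ∀ p : ℕ × ℕ, ‖F p‖ ≤ ‖h (p.1 + p.2)‖ * r ^ (p.1 + p.2) := by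
    intro p
    rw [hF]
    simp only
    rw [norm_mul]
    calc ‖h (p.1 + p.2) * (((p.1 + p.2).choose p.1 : ℕ) : k) * b ^ p.2‖ * ‖z ^ p.1‖
        ≤ (‖h (p.1 + p.2)‖ * r ^ p.2) * r ^ p.1 := by
          have h2 : ‖z ^ p.1‖ ≤ r ^ p.1 := by
            rw [norm_pow]; exact pow_le_pow_left₀ (norm_nonneg z) hzr _
          have h1 := IOD.term_bound (h := h) hbr p.1 p.2
          have : (0:ℝ) ≤ ‖h (p.1+p.2)‖ * r ^ p.2 := by positivity
          exact mul_le_mul h1 h2 (norm_nonneg _) this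
      _ = ‖h (p.1 + p.2)‖ * r ^ (p.1 + p.2) := by rw [pow_add]; ring
  have hsum : Summable F := by
    apply NonarchimedeanAddGroup.summable_of_tendsto_cofinite_zero
    rw [NormedAddCommGroup.tendsto_nhds_zero]
    intro ε hε
    rw [Filter.eventually_cofinite]
    rw [IOD.D, Metric.tendsto_atTop] at hD
    obtain ⟨K, hK⟩ := hD ε hε
    apply Set.Finite.subset (Set.finite_Icc ((0:ℕ),(0:ℕ)) (K,K))
    intro p hp
    simp only [Set.mem_setOf_eq, not_lt] at hp
    have hlt : p.1 + p.2 < K := by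
      by_contra h'
      push_neg at h'
      have h3 := hK (p.1 + p.2) h'
      rw [Real.dist_eq, sub_zero, abs_of_nonneg (by positivity)] at h3
      have := hFbound p
      linarith
    simp only [Set.mem_Icc, Prod.le_def]
    omega
  have hL : ∑' (p : ℕ × ℕ), F p = ∑' j, IOD.shift b h j * z ^ j := by
    rw [hsum.tsum_prod]
    congr 1
    funext j
    rw [IOD.shift, ← tsum_mul_right]
  have hsum2 : Summable (fun c : (Σ _n : ℕ, Fin (_n+1)) => F (IOD.diagEquiv c)) :=
    IOD.diagEquiv.summable_iff.mpr hsum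
  have hR : ∑' (p : ℕ × ℕ), F p = ∑' n, h n * (z + b) ^ n := by
    rw [← IOD.diagEquiv.tsum_eq F, hsum2.tsum_sigma]
    congr 1
    funext n
    rw [tsum_fintype]
    have hstep : ∀ q : Fin (n+1), F (IOD.diagEquiv ⟨n, q⟩) =
        h n * (z ^ (q:ℕ) * b ^ (n - (q:ℕ)) * ((n.choose (q:ℕ) : ℕ) : k)) := by
      intro q
      have hq : (q:ℕ) + (n - (q:ℕ)) = n := by omega
      show F ((q:ℕ), n - (q:ℕ)) = _
      rw [hF]
      simp only [hq]
      ring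
    rw [Finset.sum_congr rfl (fun q _ => hstep q)]
    rw [← Finset.mul_sum, add_pow z b n, Fin.sum_univ_eq_sum_range
      (fun j => z ^ j * b ^ (n - j) * ((n.choose j : ℕ) : k)) (n+1)]
  rw [← hL, hR]

/-- uniqueness of coefficients -/
lemma IOD.unique [CompleteSpace k] (hD : IOD.D r h) (hr : 0 < r)
    (hex : ∃ c : k, ‖c‖ = r)
    (hzero : ∀ z : k, ‖z‖ ≤ r → ∑' j, h j * z ^ j = 0) : ∀ j, h j = 0 := by
  intro j
  induction j using Nat.strong_induction_on with
  | _ j ih =>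
  by_contra hj
  obtain ⟨c, hc⟩ := hex
  have hattain : ∃ N, 0 ≤ N ∧ ∀ n, 0 ≤ n → ‖h n‖ * r ^ n ≤ ‖h N‖ * r ^ N := by
    exact IOD.attain (fun n => by positivity) hD 0
  obtain ⟨N₁, -, hN₁⟩ := hattain
  set C := ‖h N₁‖ * r ^ N₁ with hCdef
  have hjpos : 0 < ‖h j‖ * r ^ j := by
    have : 0 < ‖h j‖ := norm_pos_iff.mpr hj
    positivity
  have hCpos : 0 < C := lt_of_lt_of_le hjpos (hN₁ j (Nat.zero_le j))
  obtain ⟨x, hx0, hx1⟩ := NormedField.exists_norm_lt_one k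
  have hxt : Tendsto (fun τ => ‖x‖ ^ τ) atTop (nhds 0) :=
    tendsto_pow_atTop_nhds_zero_of_lt_one (norm_nonneg x) hx1
  have hev : ∀ᶠ τ in atTop, ‖x‖ ^ τ < (‖h j‖ * r ^ j) / C :=
    hxt.eventually_lt_const (by positivity)
  obtain ⟨τ, hτ⟩ := hev.exists
  have hτ' : C * ‖x‖ ^ τ < ‖h j‖ * r ^ j := by
    rw [← lt_div_iff₀' hCpos]
    rwa [div_eq_inv_mul] at hτ ⊢
  set z := c * x ^ τ with hzdef
  have hznorm : ‖z‖ = r * ‖x‖ ^ τ := by rw [hzdef, norm_mul, norm_pow, hc]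
  have hzpos : 0 < ‖z‖ := by rw [hznorm]; positivity
  have hzr : ‖z‖ ≤ r := by
    rw [hznorm]
    nlinarith [pow_le_one₀ (norm_nonneg x) hx1.le (n := τ)]
  have hsum0 := hzero z hzr
  set u := fun n => h n * z ^ n with hu
  have husum : Summable u := IOD.summable_rep hD hzr
  have hnorm_u : ∀ n, ‖u n‖ = ‖h n‖ * r ^ n * ‖x‖ ^ (τ * n) := by
    intro n
    rw [hu]
    simp only
    rw [norm_mul, norm_pow, hznorm, mul_pow, ← pow_mul]
    ring
  have hdom : ‖∑' n, u n‖ = ‖u j‖ := by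
    apply IOD.norm_tsum_eq_of_dominant husum (n₀ := j) (β := C * ‖x‖ ^ (τ * (j+1)))
    · positivity
    · rw [hnorm_u j]
      have hx2 : (0:ℝ) < ‖x‖ ^ (τ * j) := by positivity
      have h3 : τ * (j + 1) = τ * j + τ := by ring
      rw [h3, pow_add]
      nlinarith [mul_lt_mul_of_pos_right hτ' hx2]
    · intro n hn
      rcases lt_or_gt_of_ne hn with hlt | hgt
      · rw [hu]
        simp only
        rw [ih n hlt]
        simp only [zero_mul, norm_zero]
        positivity
      · rw [hnorm_u n]
        calc ‖h n‖ * r ^ n * ‖x‖ ^ (τ * n) ≤ C * ‖x‖ ^ (τ * n) := by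
              have := hN₁ n (Nat.zero_le n)
              have : (0:ℝ) ≤ ‖x‖ ^ (τ * n) := by positivity
              nlinarith [hN₁ n (Nat.zero_le n)]
          _ ≤ C * ‖x‖ ^ (τ * (j + 1)) := by
              apply mul_le_mul_of_nonneg_left _ hCpos.le
              apply pow_le_pow_of_le_one (norm_nonneg x) hx1.le
              have : j + 1 ≤ n := hgt
              exact Nat.mul_le_mul_left τ this
  rw [hsum0, norm_zero] at hdom
  have : u j ≠ 0 := by
    rw [hu]
    simp only
    apply mul_ne_zero hj
    apply pow_ne_zero
    intro hz0
    rw [hz0, norm_zero] at hzpos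
    exact lt_irrefl _ hzpos
  exact this (norm_eq_zero.mp hdom.symm)


end Aux
section Aux2
variable {k : Type*} [NontriviallyNormedField k] [IsUltrametricDist k]
variable {r : ℝ} {b z : k} {h : ℕ → k}

lemma IOD.norm_sub_le_max (x y : k) : ‖x - y‖ ≤ max ‖x‖ ‖y‖ := by
  rw [sub_eq_add_neg]
  refine (IsUltrametricDist.norm_add_le_max x (-y)).trans ?_
  rw [norm_neg]

/-- S4: recentering by `b` then by `-b` is the identity. -/
lemma IOD.shift_inv [CompleteSpace k] (hD : IOD.D r h) (hr : 0 < r)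
    (hex : ∃ c : k, ‖c‖ = r) (hbr : ‖b‖ ≤ r) :
    ∀ j, IOD.shift (-b) (IOD.shift b h) j = h j := by
  have hbr' : ‖-b‖ ≤ r := by rwa [norm_neg]
  have hD1 : IOD.D r (IOD.shift b h) := IOD.shift_decay hD hr hbr
  have hD2 : IOD.D r (IOD.shift (-b) (IOD.shift b h)) := IOD.shift_decay hD1 hr hbr'
  have hDg : IOD.D r (fun j => IOD.shift (-b) (IOD.shift b h) j - h j) := by
    apply squeeze_zero (fun n => by positivity)
      (g := fun n => max (‖IOD.shift (-b) (IOD.shift b h) n‖ * r ^ n) (‖h n‖ * r ^ n))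
    · intro n
      calc ‖IOD.shift (-b) (IOD.shift b h) n - h n‖ * r ^ n
          ≤ max ‖IOD.shift (-b) (IOD.shift b h) n‖ ‖h n‖ * r ^ n :=
            mul_le_mul_of_nonneg_right (IOD.norm_sub_le_max _ _) (by positivity)
        _ = max (‖IOD.shift (-b) (IOD.shift b h) n‖ * r ^ n) (‖h n‖ * r ^ n) :=
            max_mul_of_nonneg _ _ (show (0:ℝ) ≤ r ^ n by positivity)
    · have := hD2.max hD
      simpa using this
  have hrep : ∀ z : k, ‖z‖ ≤ r →
      ∑' j, (IOD.shift (-b) (IOD.shift b h) j - h j) * z ^ j = 0 := by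
    intro z hzr
    have hzb : ‖z + -b‖ ≤ r :=
      le_trans (IsUltrametricDist.norm_add_le_max z (-b)) (max_le hzr hbr')
    have e1 : ∑' j, IOD.shift (-b) (IOD.shift b h) j * z ^ j
        = ∑' i, IOD.shift b h i * (z + -b) ^ i := IOD.shift_rep hD1 hr hbr' hzr
    have e2 : ∑' i, IOD.shift b h i * (z + -b) ^ i = ∑' n, h n * ((z + -b) + b) ^ n :=
      IOD.shift_rep hD hr hbr hzb
    have e3 : ∀ n : ℕ, h n * ((z + -b) + b) ^ n = h n * z ^ n := by
      intro n; congr 2; ring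
    calc ∑' j, (IOD.shift (-b) (IOD.shift b h) j - h j) * z ^ j
        = ∑' j, (IOD.shift (-b) (IOD.shift b h) j * z ^ j - h j * z ^ j) := by
          apply tsum_congr; intro j; ring
      _ = (∑' j, IOD.shift (-b) (IOD.shift b h) j * z ^ j) - ∑' j, h j * z ^ j :=
          Summable.tsum_sub (IOD.summable_rep hD2 hzr) (IOD.summable_rep hD hzr)
      _ = 0 := by
          rw [e1, e2, tsum_congr e3, sub_self]
  intro j
  exact sub_eq_zero.mp (IOD.unique hDg hr hex hrep j)

/-- Lipschitz estimate on the closed disc. -/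
lemma IOD.lipschitz [CompleteSpace k] (hD : IOD.D r h) (hr : 0 < r) {x y : k}
    (hx : ‖x‖ ≤ r) (hy : ‖y‖ ≤ r) {C : ℝ} (hC : ∀ n, ‖h n‖ * r ^ n ≤ C) :
    ‖(∑' n, h n * x ^ n) - ∑' n, h n * y ^ n‖ ≤ C / r * ‖x - y‖ := by
  have hsx := IOD.summable_rep hD hx
  have hsy := IOD.summable_rep hD hy
  rw [← hsx.tsum_sub hsy]
  have hC0 : (0:ℝ) ≤ C := le_trans (by positivity) (hC 0)
  apply IsUltrametricDist.norm_tsum_le_of_forall_le_of_nonneg (by positivity)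
  intro n
  have he : h n * x ^ n - h n * y ^ n
      = h n * ((∑ i ∈ Finset.range n, x ^ i * y ^ (n - 1 - i)) * (x - y)) := by
    rw [geom_sum₂_mul]; ring
  rw [he, norm_mul, norm_mul]
  cases n with
  | zero => simp; positivity
  | succ n =>
    have hgs : ‖∑ i ∈ Finset.range (n+1), x ^ i * y ^ (n + 1 - 1 - i)‖ ≤ r ^ n := by
      apply IsUltrametricDist.norm_sum_le_of_forall_le_of_nonneg (by positivity)
      intro i hi
      rw [Finset.mem_range] at hi
      rw [norm_mul, norm_pow, norm_pow]
      calc ‖x‖ ^ i * ‖y‖ ^ (n + 1 - 1 - i)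
          ≤ r ^ i * r ^ (n + 1 - 1 - i) := by
            have h1 := pow_le_pow_left₀ (norm_nonneg x) hx i
            have h2 := pow_le_pow_left₀ (norm_nonneg y) hy (n + 1 - 1 - i)
            exact mul_le_mul h1 h2 (by positivity) (by positivity)
        _ = r ^ n := by rw [← pow_add]; congr 1; omega
    have h1 : ‖h (n+1)‖ * r ^ n ≤ C / r := by
      rw [le_div_iff₀ hr]
      calc ‖h (n+1)‖ * r ^ n * r = ‖h (n+1)‖ * r ^ (n+1) := by rw [pow_succ]; ring
        _ ≤ C := hC (n+1)
    calc ‖h (n+1)‖ * (‖∑ i ∈ Finset.range (n+1), x ^ i * y ^ (n + 1 - 1 - i)‖ * ‖x - y‖)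
        ≤ ‖h (n+1)‖ * (r ^ n * ‖x - y‖) := by
          apply mul_le_mul_of_nonneg_left _ (norm_nonneg _)
          exact mul_le_mul_of_nonneg_right hgs (norm_nonneg _)
      _ = (‖h (n+1)‖ * r ^ n) * ‖x - y‖ := by ring
      _ ≤ C / r * ‖x - y‖ := mul_le_mul_of_nonneg_right h1 (norm_nonneg _)

end Aux2

/-- Image of a disc: for a non-constant power series convergent on the closed disc of
radius `r ∈ |k*|`, with `m ≥ 1` the minimal index with `a_m ≠ 0` and
`δ = sup_{n ≥ m} ‖aₙ‖ rⁿ`, the image of the closed disc of radius `r` is exactly the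
closed disc of radius `δ` centered at `a₀`. -/
theorem image_of_disc
    (k : Type*) [NontriviallyNormedField k] [IsAlgClosed k] [CompleteSpace k]
    [IsUltrametricDist k]
    (a : ℕ → k) (c : k) (hc : c ≠ 0) (r : ℝ) (hr : r = ‖c‖)
    (hdecay : Tendsto (fun n => ‖a n‖ * r ^ n) atTop (nhds 0))
    (m : ℕ) (hm1 : 1 ≤ m) (ham : a m ≠ 0)
    (hmin : ∀ n, 1 ≤ n → n < m → a n = 0)
    (δ : ℝ) (hδ : δ = ⨆ n : ℕ, ‖a (m + n)‖ * r ^ (m + n)) :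
    (fun z : k => ∑' n : ℕ, a n * z ^ n) '' {z : k | ‖z‖ ≤ r}
      = {w : k | ‖w - a 0‖ ≤ δ} := by
  have hr0 : 0 < r := by rw [hr]; exact norm_pos_iff.mpr hc
  have hex : ∃ c' : k, ‖c'‖ = r := ⟨c, hr.symm⟩
  have hDa : IOD.D r a := hdecay
  set t : ℕ → ℝ := fun n => ‖a n‖ * r ^ n with ht
  have ht0 : ∀ n, 0 ≤ t n := fun n => by positivity
  -- global max C₀
  obtain ⟨Nc, -, hNc⟩ := IOD.attain ht0 hdecay 0
  set C₀ := t Nc with hC₀def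
  have hC₀ : ∀ n, t n ≤ C₀ := fun n => hNc n (Nat.zero_le n)
  -- δ is attained
  obtain ⟨Nm, hNmge, hNm⟩ := IOD.attain ht0 hdecay m
  have hbdd : BddAbove (Set.range fun i => t (m + i)) :=
    ⟨t Nm, by rintro x ⟨i, rfl⟩; exact hNm (m+i) (Nat.le_add_right m i)⟩
  have hδeq : δ = t Nm := by
    rw [hδ]
    apply le_antisymm
    · exact ciSup_le (fun i => hNm (m+i) (Nat.le_add_right m i))
    · have he : t Nm = t (m + (Nm - m)) := by congr 1; omega
      rw [he]
      exact le_ciSup hbdd (Nm - m)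
  have hδpos : 0 < δ := by
    have h1 : 0 < t m := by
      have := norm_pos_iff.mpr ham
      rw [ht]; positivity
    rw [hδeq]; exact lt_of_lt_of_le h1 (hNm m le_rfl)
  have htle : ∀ n, 1 ≤ n → t n ≤ δ := by
    intro n h1
    by_cases hnm : n < m
    · have : t n = 0 := by rw [ht]; simp [hmin n h1 hnm]
      rw [this]; exact hδpos.le
    · push_neg at hnm; rw [hδeq]; exact hNm n hnm
  -- N₀ : last index where δ is attained
  obtain ⟨K, hK⟩ := eventually_atTop.mp (hdecay.eventually_lt_const hδpos)
  set S : Finset ℕ := (Finset.range K).filter (fun n => 1 ≤ n ∧ δ ≤ t n) with hS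
  have hNmS : Nm ∈ S := by
    rw [hS, Finset.mem_filter, Finset.mem_range]
    refine ⟨?_, le_trans hm1 hNmge, hδeq.le⟩
    by_contra hh
    push_neg at hh
    have := hK Nm hh
    rw [← hδeq] at this
    exact lt_irrefl _ this
  have hSne : S.Nonempty := ⟨Nm, hNmS⟩
  set N₀ := S.max' hSne with hN₀
  have hN₀1 : 1 ≤ N₀ := (Finset.mem_filter.mp (S.max'_mem hSne)).2.1
  have hNmN₀ : Nm ≤ N₀ := S.le_max' Nm hNmS
  have hN₀lt : ∀ n, N₀ < n → t n < δ := by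
    intro n hn
    by_cases hnK : K ≤ n
    · exact hK n hnK
    · push_neg at hnK
      by_contra hh
      push_neg at hh
      have hmem : n ∈ S := by
        rw [hS, Finset.mem_filter, Finset.mem_range]
        exact ⟨hnK, by omega, hh⟩
      have := S.le_max' n hmem
      omega
  set θ : ℝ := 1/2 with hθ
  have hθ0 : (0:ℝ) < θ := by norm_num
  have hθ1 : θ < 1 := by norm_num
  -- P1'-type condition implies decay
  have hP1decay : ∀ h' : ℕ → k,
      (∀ j B, (∀ n, j ≤ n → t n ≤ B) → ‖h' j‖ * r ^ j ≤ B) → IOD.D r h' := by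
    intro h' hP1
    rw [IOD.D, Metric.tendsto_atTop]
    intro ε hε
    obtain ⟨K', hK'⟩ := eventually_atTop.mp (hdecay.eventually_lt_const (by positivity : (0:ℝ) < ε/2))
    refine ⟨K', fun j hj => ?_⟩
    have hb := hP1 j (ε/2) (fun n hn => (hK' n (le_trans hj hn)).le)
    rw [Real.dist_eq, sub_zero, abs_of_nonneg (by positivity)]
    linarith
  apply Set.Subset.antisymm
  · -- easy inclusion
    rintro w ⟨z, hz, rfl⟩
    simp only [Set.mem_setOf_eq] at hz ⊢
    have hsum := IOD.summable_rep hDa hz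
    have e : (∑' n, a n * z ^ n) - a 0 = ∑' n, a (n+1) * z ^ (n+1) := by
      rw [hsum.tsum_eq_zero_add]
      simp
    rw [e]
    apply IsUltrametricDist.norm_tsum_le_of_forall_le_of_nonneg hδpos.le
    intro n
    calc ‖a (n+1) * z ^ (n+1)‖ = ‖a (n+1)‖ * ‖z‖ ^ (n+1) := by rw [norm_mul, norm_pow]
      _ ≤ ‖a (n+1)‖ * r ^ (n+1) :=
          mul_le_mul_of_nonneg_left (pow_le_pow_left₀ (norm_nonneg z) hz _) (norm_nonneg _)
      _ ≤ δ := htle (n+1) (by omega)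
  · -- hard inclusion
    intro w hw
    simp only [Set.mem_setOf_eq] at hw
    set Inv : ℕ → k × (ℕ → k) → Prop := fun τ p =>
      ‖p.1‖ ≤ r ∧
      (∀ j B, (∀ n, j ≤ n → t n ≤ B) → ‖p.2 j‖ * r ^ j ≤ B) ∧
      (∀ j, 1 ≤ j → ‖p.2 j‖ * r ^ j ≤ δ) ∧
      (∃ N, 1 ≤ N ∧ N ≤ N₀ ∧ ‖p.2 N‖ * r ^ N = δ) ∧
      (∀ z : k, ‖z‖ ≤ r → ∑' j, p.2 j * z ^ j = ∑' n, a n * (p.1 + z) ^ n) ∧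
      ‖p.2 0 - w‖ ≤ δ * θ ^ (N₀ * τ) with hInv
    -- the inductive step
    have step : ∀ τ (p : k × (ℕ → k)), Inv τ p →
        ∃ q : k × (ℕ → k), Inv (τ+1) q ∧ ‖q.1 - p.1‖ ≤ r * θ ^ τ := by
      rintro τ ⟨Z, h⟩ hp
      rw [hInv] at hp
      dsimp only at hp
      obtain ⟨hZ, hP1, hP3, ⟨N, hN1, hNN₀, hNδ⟩, hrep, hεb⟩ := hp
      have hDh : IOD.D r h := hP1decay h hP1
      set η := δ * θ ^ (N₀ * (τ+1)) with hηdef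
      have hη : 0 < η := by positivity
      obtain ⟨K₁, hK₁⟩ := eventually_atTop.mp (hdecay.eventually_lt_const hη)
      set M := max N K₁ with hM
      have htail : ∀ n, M + 1 ≤ n → ‖h n‖ * r ^ n ≤ η := by
        intro n hn
        apply hP1 n η
        intro n' hn'
        exact (hK₁ n' (by omega)).le
      have htrunc : ∀ z : k, ‖z‖ ≤ r →
          ‖(∑' j, h j * z ^ j) - ∑ j ∈ Finset.range (M+1), h j * z ^ j‖ ≤ η := by
        intro z hz
        have hsum := IOD.summable_rep hDh hz
        rw [← hsum.sum_add_tsum_nat_add (M+1), add_sub_cancel_left]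
        apply IsUltrametricDist.norm_tsum_le_of_forall_le_of_nonneg hη.le
        intro i
        calc ‖h (i+(M+1)) * z ^ (i+(M+1))‖ = ‖h (i+(M+1))‖ * ‖z‖ ^ (i+(M+1)) := by
              rw [norm_mul, norm_pow]
          _ ≤ ‖h (i+(M+1))‖ * r ^ (i+(M+1)) :=
              mul_le_mul_of_nonneg_left (pow_le_pow_left₀ (norm_nonneg z) hz _) (norm_nonneg _)
          _ ≤ η := htail _ (by omega)
      set Q : Polynomial k :=
        (∑ j ∈ Finset.range (M+1), Polynomial.C (h j) * Polynomial.X ^ j) - Polynomial.C w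
        with hQ
      have hQcoeff : ∀ i, i ≤ M → Q.coeff i = (if i = 0 then h 0 - w else h i) := by
        intro i hi
        rw [hQ, Polynomial.coeff_sub, Polynomial.finset_sum_coeff]
        simp only [Polynomial.coeff_C_mul, Polynomial.coeff_X_pow, Polynomial.coeff_C,
          mul_ite, mul_one, mul_zero]
        rw [Finset.sum_ite_eq (Finset.range (M+1)) i (fun j => h j)]
        simp only [Finset.mem_range]
        by_cases hi0 : i = 0
        · simp [hi0]
        · simp [hi0, Nat.lt_succ_of_le hi]
      have hc0 : Q.coeff 0 = h 0 - w := by rw [hQcoeff 0 (Nat.zero_le M)]; simp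
      have hcN : Q.coeff N = h N := by
        rw [hQcoeff N (le_max_left N K₁)]
        simp [Nat.one_le_iff_ne_zero.mp hN1]
      set ρ := r * θ ^ τ with hρ
      have hρpos : 0 < ρ := by positivity
      have hAhyp : ‖Q.coeff 0‖ ≤ ‖Q.coeff N‖ * ρ ^ N := by
        rw [hc0, hcN]
        calc ‖h 0 - w‖ ≤ δ * θ ^ (N₀ * τ) := hεb
          _ ≤ δ * θ ^ (τ * N) := by
              apply mul_le_mul_of_nonneg_left _ hδpos.le
              apply pow_le_pow_of_le_one hθ0.le hθ1.le
              calc τ * N ≤ τ * N₀ := Nat.mul_le_mul_left τ hNN₀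
                _ = N₀ * τ := Nat.mul_comm τ N₀
          _ = ‖h N‖ * ρ ^ N := by
              rw [hρ, mul_pow, ← hNδ, ← pow_mul]
              ring
      obtain ⟨y, hyρ, hyroot⟩ := IOD.polynomial_root_in_disc Q hρpos hN1 hAhyp
      have hρr : ρ ≤ r := by
        rw [hρ]
        nlinarith [pow_le_one₀ hθ0.le hθ1.le (n := τ)]
      have hyr : ‖y‖ ≤ r := le_trans hyρ hρr
      have hpoly : (∑ j ∈ Finset.range (M+1), h j * y ^ j) = w := by
        rw [hQ] at hyroot
        simp only [Polynomial.eval_sub, Polynomial.eval_finset_sum, Polynomial.eval_mul,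
          Polynomial.eval_C, Polynomial.eval_pow, Polynomial.eval_X] at hyroot
        exact sub_eq_zero.mp hyroot
      set h' := IOD.shift y h with hh'
      have hDh' : IOD.D r h' := IOD.shift_decay hDh hr0 hyr
      have hfy : h' 0 = ∑' j, h j * y ^ j := by
        rw [hh', IOD.shift]
        apply tsum_congr
        intro i
        simp
      have hε' : ‖h' 0 - w‖ ≤ η := by
        rw [hfy]
        have h1 := htrunc y hyr
        rwa [hpoly] at h1
      have hP1' : ∀ j B, (∀ n, j ≤ n → t n ≤ B) → ‖h' j‖ * r ^ j ≤ B := by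
        intro j B hB
        apply IOD.shift_bound hr0 hyr
        intro n hn
        exact hP1 n B (fun n' hn' => hB n' (le_trans hn hn'))
      refine ⟨(Z + y, h'), ?_, ?_⟩
      · rw [hInv]
        refine ⟨?_, hP1', ?_, ?_, ?_, ?_⟩
        · exact le_trans (IsUltrametricDist.norm_add_le_max Z y) (max_le hZ hyr)
        · -- P3
          intro j hj
          apply IOD.shift_bound hr0 hyr
          intro n hn
          exact hP3 n (le_trans hj hn)
        · -- P2
          have hinv := IOD.shift_inv hDh hr0 hex hyr
          obtain ⟨j₁, hj₁1, hj₁max⟩ :=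
            IOD.attain (t := fun j => ‖h' j‖ * r ^ j) (fun n => by positivity) hDh' 1
          have hge : δ ≤ ‖h' j₁‖ * r ^ j₁ := by
            rw [← hNδ, ← hinv N]
            apply IOD.shift_bound hr0 (by rwa [norm_neg])
            intro n hn
            exact hj₁max n (le_trans hN1 hn)
          have hle : ‖h' j₁‖ * r ^ j₁ ≤ δ := by
            apply IOD.shift_bound hr0 hyr
            intro n hn
            exact hP3 n (le_trans hj₁1 hn)
          have heq : ‖h' j₁‖ * r ^ j₁ = δ := le_antisymm hle hge
          have hj₁N₀ : j₁ ≤ N₀ := by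
            by_contra hgt
            push_neg at hgt
            obtain ⟨ν, hν, hνb⟩ := IOD.attain ht0 hdecay j₁
            have h1 : ‖h' j₁‖ * r ^ j₁ ≤ t ν := by
              apply IOD.shift_bound hr0 hyr
              intro n hn
              exact hP1 n (t ν) (fun n' hn' => hνb n' (le_trans hn hn'))
            have h2 : t ν < δ := hN₀lt ν (by omega)
            linarith
          exact ⟨j₁, hj₁1, hj₁N₀, heq⟩
        · -- rep
          intro z hz
          have hzy : ‖z + y‖ ≤ r :=
            le_trans (IsUltrametricDist.norm_add_le_max z y) (max_le hz hyr)
          have e1 : ∑' j, h' j * z ^ j = ∑' n, h n * (z + y) ^ n :=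
            IOD.shift_rep hDh hr0 hyr hz
          have e2 := hrep (z + y) hzy
          rw [e1, e2]
          apply tsum_congr
          intro n
          congr 2
          ring
        · exact hε'
      · simp only [add_sub_cancel_left]
        exact hyρ
    -- base case
    have hbase : Inv 0 ((0 : k), a) := by
      rw [hInv]
      refine ⟨by simp [hr0.le], ?_, ?_, ?_, ?_, ?_⟩
      · intro j B hB
        exact hB j le_rfl
      · exact htle
      · exact ⟨Nm, le_trans hm1 hNmge, hNmN₀, hδeq.symm⟩
      · intro z hz
        apply tsum_congr
        intro n
        rw [zero_add]
      · simp only [Nat.mul_zero, pow_zero, mul_one]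
        rw [norm_sub_rev]
        exact hw
    -- build sequence
    let seq : (τ : ℕ) → {p : k × (ℕ → k) // Inv τ p} := fun τ =>
      Nat.rec ⟨((0:k), a), hbase⟩
        (fun τ' prev => ⟨Classical.choose (step τ' prev.1 prev.2),
          (Classical.choose_spec (step τ' prev.1 prev.2)).1⟩) τ
    set Z : ℕ → k := fun τ => (seq τ).1.1 with hZdef
    have hdist : ∀ τ, ‖Z (τ+1) - Z τ‖ ≤ r * θ ^ τ := by
      intro τ
      exact (Classical.choose_spec (step τ (seq τ).1 (seq τ).2)).2
    have hZr : ∀ τ, ‖Z τ‖ ≤ r := by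
      intro τ
      have hthis := (seq τ).2
      simp only [hInv] at hthis
      exact hthis.1
    have hcauchy : CauchySeq Z := by
      apply cauchySeq_of_le_geometric θ r hθ1
      intro n
      rw [dist_eq_norm, norm_sub_rev]
      exact hdist n
    obtain ⟨L, hL⟩ := cauchySeq_tendsto_of_complete hcauchy
    have hLr : ‖L‖ ≤ r :=
      le_of_tendsto hL.norm (Filter.Eventually.of_forall hZr)
    have hval : ∀ τ, (∑' n, a n * (Z τ) ^ n) = (seq τ).1.2 0 := by
      intro τ
      have hrepτ := (seq τ).2
      simp only [hInv] at hrepτ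
      have h1 := hrepτ.2.2.2.2.1 0 (by simp [hr0.le])
      rw [add_zero] at h1
      rw [← h1, tsum_eq_single 0 ?_]
      · simp
      · intro b hb
        simp [zero_pow hb]
    have hεall : ∀ τ, ‖(∑' n, a n * (Z τ) ^ n) - w‖ ≤ δ * θ ^ τ := by
      intro τ
      have hiτ := (seq τ).2
      simp only [hInv] at hiτ
      have h1 := hiτ.2.2.2.2.2
      rw [hval τ]
      refine h1.trans ?_
      apply mul_le_mul_of_nonneg_left _ hδpos.le
      apply pow_le_pow_of_le_one hθ0.le hθ1.le
      calc τ = 1 * τ := (one_mul τ).symm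
        _ ≤ N₀ * τ := Nat.mul_le_mul_right τ hN₀1
    have hw' : Tendsto (fun τ => ∑' n, a n * (Z τ) ^ n) atTop (nhds w) := by
      rw [tendsto_iff_norm_sub_tendsto_zero]
      apply squeeze_zero (fun τ => norm_nonneg _) hεall
      have := tendsto_pow_atTop_nhds_zero_of_lt_one hθ0.le hθ1
      simpa using this.const_mul δ
    have hcont : Tendsto (fun τ => ∑' n, a n * (Z τ) ^ n) atTop
        (nhds (∑' n, a n * L ^ n)) := by
      rw [tendsto_iff_norm_sub_tendsto_zero]
      have h2 : Tendsto (fun τ => ‖Z τ - L‖) atTop (nhds 0) := by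
        rw [← tendsto_iff_norm_sub_tendsto_zero]
        exact hL
      apply squeeze_zero (fun τ => norm_nonneg _)
        (g := fun τ => C₀ / r * ‖Z τ - L‖)
      · intro τ
        exact IOD.lipschitz hDa hr0 (hZr τ) hLr hC₀
      · simpa using h2.const_mul (C₀ / r)
    have hfinal : (∑' n, a n * L ^ n) = w := tendsto_nhds_unique hcont hw'
    exact ⟨L, hLr, hfinal⟩
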